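/- arXiv:2010.03390 — 4 statements merged into one kernel-verified Lean document; each statement's English description precedes it below -/
import Mathlib

section
/- Let U, Z, A be random variables on a probability space with Z, A taking values in {−1, 1}, and let Y₁, Y₋₁ be integrable real random variables (potential outcomes). Suppose Z ⟂ U, and (Y₁, Y₋₁) ⟂ (Z, A) given U, and Y = Y₁·1{A=1} + Y₋₁·1{A=−1}. Then E[Y | Z = 1] − E[Y | Z = −1] = E[ γ̃(U) · δ̃(U) ], where γ̃(U) := E[Y₁ − Y₋₁ | U] and δ̃(U) := P(A = 1 | Z = 1, U) − P(A = 1 | Z = −1, U). -/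
open MeasureTheory

lemma transfer_aux {Ω : Type*} [MeasurableSpace Ω] (μ : Measure Ω) [IsFiniteMeasure μ]
    (X : Ω → ℝ) (hX : AEStronglyMeasurable X μ) (S T : Set Ω)
    (hS : MeasurableSet S) (hT : MeasurableSet T)
    (h : ∀ B : Set ℝ, MeasurableSet B →
      (μ ({ω | X ω ∈ B} ∩ S)).toReal * (μ T).toReal =
        (μ ({ω | X ω ∈ B} ∩ T)).toReal * (μ S).toReal) :
    (∫ ω in S, X ω ∂μ) * (μ T).toReal = (∫ ω in T, X ω ∂μ) * (μ S).toReal := by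
  obtain ⟨W, hWm, hWae⟩ := hX
  have hWmeas : Measurable W := hWm.measurable
  have hcongr : ∀ (B : Set ℝ) (s : Set Ω), μ ({ω | X ω ∈ B} ∩ s) = μ (W ⁻¹' B ∩ s) := by
    intro B s
    apply measure_congr
    apply Filter.eventuallyEq_set.2
    filter_upwards [hWae] with ω hω
    simp [Set.mem_preimage, hω]
  have key : (μ T) • Measure.map W (μ.restrict S) = (μ S) • Measure.map W (μ.restrict T) := by
    ext B hB
    rw [Measure.smul_apply, Measure.smul_apply, smul_eq_mul, smul_eq_mul,
      Measure.map_apply hWmeas hB, Measure.map_apply hWmeas hB,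
      Measure.restrict_apply (hWmeas hB), Measure.restrict_apply (hWmeas hB)]
    have h1 := h B hB
    rw [hcongr B S, hcongr B T] at h1
    have hfin1 : μ (W ⁻¹' B ∩ S) * μ T ≠ ⊤ := ENNReal.mul_ne_top (measure_ne_top _ _) (measure_ne_top _ _)
    have hfin2 : μ (W ⁻¹' B ∩ T) * μ S ≠ ⊤ := ENNReal.mul_ne_top (measure_ne_top _ _) (measure_ne_top _ _)
    have : (μ (W ⁻¹' B ∩ S) * μ T).toReal = (μ (W ⁻¹' B ∩ T) * μ S).toReal := by
      rw [ENNReal.toReal_mul, ENNReal.toReal_mul]; exact h1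
    have h2 := (ENNReal.toReal_eq_toReal_iff' hfin1 hfin2).1 this
    rw [mul_comm] at h2
    rw [h2, mul_comm]
  have hmapS : ∫ x, x ∂(Measure.map W (μ.restrict S)) = ∫ ω in S, W ω ∂μ :=
    integral_map hWmeas.aemeasurable measurable_id.aestronglyMeasurable
  have hmapT : ∫ x, x ∂(Measure.map W (μ.restrict T)) = ∫ ω in T, W ω ∂μ :=
    integral_map hWmeas.aemeasurable measurable_id.aestronglyMeasurable
  have hintS : ∫ x, x ∂(Measure.map W (μ.restrict S)) = ∫ ω in S, X ω ∂μ :=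
    hmapS.trans (integral_congr_ae (ae_restrict_of_ae hWae.symm))
  have hintT : ∫ x, x ∂(Measure.map W (μ.restrict T)) = ∫ ω in T, X ω ∂μ :=
    hmapT.trans (integral_congr_ae (ae_restrict_of_ae hWae.symm))
  have := congrArg (fun ν : Measure ℝ => ∫ x, x ∂ν) key
  simp only [integral_smul_measure, smul_eq_mul] at this
  rw [hintS, hintT] at this
  linarith [this]

lemma partition_aux {Ω 𝒰 : Type*} [MeasurableSpace Ω] [Fintype 𝒰] (μ : Measure Ω)
    (U : Ω → 𝒰) (hU : ∀ u, MeasurableSet {ω | U ω = u}) (f : Ω → ℝ) (hf : Integrable f μ)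
    (s : Set Ω) :
    ∫ ω in s, f ω ∂μ = ∑ u : 𝒰, ∫ ω in s ∩ {ω | U ω = u}, f ω ∂μ := by
  have hfun : ∀ ω, f ω = ∑ u : 𝒰, Set.indicator {ω' | U ω' = u} f ω := by
    intro ω
    rw [Finset.sum_eq_single (U ω)]
    · simp [Set.indicator_apply]
    · intro b _ hb
      simp [Set.indicator_apply, Ne.symm hb]
    · simp
  calc ∫ ω in s, f ω ∂μ = ∫ ω in s, (∑ u : 𝒰, Set.indicator {ω' | U ω' = u} f ω) ∂μ := by
        exact integral_congr_ae (Filter.Eventually.of_forall fun ω => hfun ω)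
    _ = ∑ u : 𝒰, ∫ ω in s, Set.indicator {ω' | U ω' = u} f ω ∂μ := by
        apply integral_finset_sum
        intro u _
        exact (hf.indicator (hU u)).integrableOn
    _ = ∑ u : 𝒰, ∫ ω in s ∩ {ω' | U ω' = u}, f ω ∂μ := by
        refine Finset.sum_congr rfl fun u _ => ?_
        exact setIntegral_indicator (hU u)

/-- Wald decomposition: E[Y|Z=1] − E[Y|Z=−1] = E[γ̃(U) δ̃(U)], with U finitely valued,
Z ⟂ U, and (Y₁,Y₋₁) ⟂ (Z,A) | U (stated elementwise on events), and consistency. -/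
theorem stmt_7 {Ω 𝒰 : Type*} [MeasurableSpace Ω] [Fintype 𝒰]
    (μ : Measure Ω) [IsProbabilityMeasure μ]
    (P : Set Ω → ℝ) (hP : ∀ s, P s = (μ s).toReal)
    (Z A : Ω → ℝ) (hZmeas : Measurable Z) (hAmeas : Measurable A)
    (hZpm : ∀ ω, Z ω = 1 ∨ Z ω = -1) (hApm : ∀ ω, A ω = 1 ∨ A ω = -1)
    (U : Ω → 𝒰) (hUmeas : ∀ u, MeasurableSet {ω | U ω = u})
    (Y1 Ym1 Y : Ω → ℝ) (hY1 : Integrable Y1 μ) (hYm1 : Integrable Ym1 μ)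
    -- consistency
    (hY : ∀ ω, Y ω = Y1 ω * (if A ω = 1 then 1 else 0) + Ym1 ω * (if A ω = -1 then 1 else 0))
    -- positivity
    (hZpos : ∀ z : ℝ, (z = 1 ∨ z = -1) → 0 < P {ω | Z ω = z})
    (hZUpos : ∀ (z : ℝ) (u : 𝒰), (z = 1 ∨ z = -1) → 0 < P {ω | Z ω = z ∧ U ω = u})
    -- IV independence: Z ⟂ U
    (hindep : ∀ (z : ℝ) (u : 𝒰),
      P {ω | Z ω = z ∧ U ω = u} = P {ω | Z ω = z} * P {ω | U ω = u})
    -- latent unconfoundedness: (Y₁,Y₋₁) ⟂ (Z,A) | U, elementwise on events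
    (hlatent : ∀ (B : Set (ℝ × ℝ)), MeasurableSet B → ∀ (z a : ℝ) (u : 𝒰),
      P {ω | (Y1 ω, Ym1 ω) ∈ B ∧ Z ω = z ∧ A ω = a ∧ U ω = u} * P {ω | U ω = u} =
        P {ω | (Y1 ω, Ym1 ω) ∈ B ∧ U ω = u} * P {ω | Z ω = z ∧ A ω = a ∧ U ω = u})
    -- γ̃ and δ̃
    (γt δt : 𝒰 → ℝ)
    (hγt : ∀ u, γt u = (∫ ω in {ω | U ω = u}, (Y1 ω - Ym1 ω) ∂μ) / P {ω | U ω = u})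
    (hδt : ∀ u, δt u =
      P {ω | A ω = 1 ∧ Z ω = 1 ∧ U ω = u} / P {ω | Z ω = 1 ∧ U ω = u} -
        P {ω | A ω = 1 ∧ Z ω = -1 ∧ U ω = u} / P {ω | Z ω = -1 ∧ U ω = u}) :
    (∫ ω in {ω | Z ω = 1}, Y ω ∂μ) / P {ω | Z ω = 1} -
      (∫ ω in {ω | Z ω = -1}, Y ω ∂μ) / P {ω | Z ω = -1} =
      ∑ u : 𝒰, γt u * δt u * P {ω | U ω = u} := by
  classical
  have hSz : ∀ z : ℝ, MeasurableSet {ω | Z ω = z} := fun z => hZmeas (measurableSet_singleton z)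
  have hSa : ∀ a : ℝ, MeasurableSet {ω | A ω = a} := fun a => hAmeas (measurableSet_singleton a)
  have hE : ∀ (z a : ℝ) (u : 𝒰), MeasurableSet {ω | Z ω = z ∧ A ω = a ∧ U ω = u} := by
    intro z a u
    have : {ω | Z ω = z ∧ A ω = a ∧ U ω = u}
        = {ω | Z ω = z} ∩ ({ω | A ω = a} ∩ {ω | U ω = u}) := by
      ext ω; simp [Set.mem_inter_iff]
    rw [this]
    exact (hSz z).inter ((hSa a).inter (hUmeas u))
  -- positivity
  have hqpos : ∀ z : ℝ, (z = 1 ∨ z = -1) → 0 < (μ {ω | Z ω = z}).toReal := by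
    intro z hz
    have := hZpos z hz; rwa [hP] at this
  have hppos : ∀ u : 𝒰, 0 < (μ {ω | U ω = u}).toReal := by
    intro u
    have h1 := hZUpos 1 u (Or.inl rfl)
    rw [hindep 1 u, hP, hP] at h1
    rcases lt_or_eq_of_le (ENNReal.toReal_nonneg : (0:ℝ) ≤ (μ {ω | U ω = u}).toReal) with h | h
    · exact h
    · rw [← h, mul_zero] at h1; exact absurd h1 (lt_irrefl 0)
  -- counting: r + s = q*p
  have hF3 : ∀ (z : ℝ) (u : 𝒰),
      (μ {ω | Z ω = z ∧ A ω = 1 ∧ U ω = u}).toReal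
        + (μ {ω | Z ω = z ∧ A ω = -1 ∧ U ω = u}).toReal
      = (μ {ω | Z ω = z}).toReal * (μ {ω | U ω = u}).toReal := by
    intro z u
    have hunion : {ω | Z ω = z ∧ A ω = 1 ∧ U ω = u} ∪ {ω | Z ω = z ∧ A ω = -1 ∧ U ω = u}
        = {ω | Z ω = z ∧ U ω = u} := by
      ext ω
      simp only [Set.mem_union, Set.mem_setOf_eq]
      rcases hApm ω with h | h <;> constructor <;> intro h' <;> simp_all <;> tauto
    have hdisj : Disjoint {ω | Z ω = z ∧ A ω = 1 ∧ U ω = u}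
        {ω | Z ω = z ∧ A ω = -1 ∧ U ω = u} := by
      rw [Set.disjoint_left]
      rintro ω ⟨_, h1, _⟩ ⟨_, h2, _⟩
      rw [h1] at h2; norm_num at h2
    have hm : μ {ω | Z ω = z ∧ U ω = u}
        = μ {ω | Z ω = z ∧ A ω = 1 ∧ U ω = u} + μ {ω | Z ω = z ∧ A ω = -1 ∧ U ω = u} := by
      rw [← hunion, measure_union hdisj (hE z (-1) u)]
    have hind := hindep z u
    rw [hP, hP, hP] at hind
    rw [← hind, hm, ENNReal.toReal_add (measure_ne_top _ _) (measure_ne_top _ _)]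
  -- splitting the outcome integral
  have hsplit : ∀ z : ℝ, (∫ ω in {ω | Z ω = z}, Y ω ∂μ)
      = (∑ u : 𝒰, ∫ ω in {ω | Z ω = z ∧ A ω = 1 ∧ U ω = u}, Y1 ω ∂μ)
        + ∑ u : 𝒰, ∫ ω in {ω | Z ω = z ∧ A ω = -1 ∧ U ω = u}, Ym1 ω ∂μ := by
    intro z
    have hint1 : Integrable (Set.indicator {ω' | A ω' = 1} Y1) μ := hY1.indicator (hSa 1)
    have hint2 : Integrable (Set.indicator {ω' | A ω' = -1} Ym1) μ := hYm1.indicator (hSa (-1))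
    have step1 : (∫ ω in {ω | Z ω = z}, Y ω ∂μ)
        = ∫ ω in {ω | Z ω = z},
            (Set.indicator {ω' | A ω' = 1} Y1 ω + Set.indicator {ω' | A ω' = -1} Ym1 ω) ∂μ := by
      refine integral_congr_ae (Filter.Eventually.of_forall fun ω => ?_)
      rw [hY ω]
      simp [Set.indicator_apply, mul_ite, mul_one, mul_zero]
    rw [step1, integral_add hint1.integrableOn hint2.integrableOn,
      setIntegral_indicator (hSa 1), setIntegral_indicator (hSa (-1)),
      partition_aux μ U hUmeas Y1 hY1, partition_aux μ U hUmeas Ym1 hYm1]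
    congr 1
    · refine Finset.sum_congr rfl fun u _ => ?_
      rw [show {ω | Z ω = z} ∩ {ω | A ω = 1} ∩ {ω | U ω = u}
          = {ω | Z ω = z ∧ A ω = 1 ∧ U ω = u} from Set.ext fun ω => and_assoc]
    · refine Finset.sum_congr rfl fun u _ => ?_
      rw [show {ω | Z ω = z} ∩ {ω | A ω = -1} ∩ {ω | U ω = u}
          = {ω | Z ω = z ∧ A ω = -1 ∧ U ω = u} from Set.ext fun ω => and_assoc]
  -- latent unconfoundedness transfer for Y1
  have hF2a : ∀ (z : ℝ) (u : 𝒰),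
      (∫ ω in {ω | Z ω = z ∧ A ω = 1 ∧ U ω = u}, Y1 ω ∂μ) * (μ {ω | U ω = u}).toReal
      = (∫ ω in {ω | U ω = u}, Y1 ω ∂μ) * (μ {ω | Z ω = z ∧ A ω = 1 ∧ U ω = u}).toReal := by
    intro z u
    refine transfer_aux μ Y1 hY1.1 _ _ (hE z 1 u) (hUmeas u) ?_
    intro B hB
    have h1 := hlatent (B ×ˢ (Set.univ : Set ℝ)) (hB.prod MeasurableSet.univ) z 1 u
    rw [hP, hP, hP, hP] at h1
    have e1 : {ω | (Y1 ω, Ym1 ω) ∈ B ×ˢ (Set.univ : Set ℝ) ∧ Z ω = z ∧ A ω = 1 ∧ U ω = u}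
        = {ω | Y1 ω ∈ B} ∩ {ω | Z ω = z ∧ A ω = 1 ∧ U ω = u} := by
      ext ω; simp [Set.mem_prod]
    have e2 : {ω | (Y1 ω, Ym1 ω) ∈ B ×ˢ (Set.univ : Set ℝ) ∧ U ω = u}
        = {ω | Y1 ω ∈ B} ∩ {ω | U ω = u} := by
      ext ω; simp [Set.mem_prod]
    rw [e1, e2] at h1
    exact h1
  -- latent unconfoundedness transfer for Ym1
  have hF2b : ∀ (z : ℝ) (u : 𝒰),
      (∫ ω in {ω | Z ω = z ∧ A ω = -1 ∧ U ω = u}, Ym1 ω ∂μ) * (μ {ω | U ω = u}).toReal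
      = (∫ ω in {ω | U ω = u}, Ym1 ω ∂μ) * (μ {ω | Z ω = z ∧ A ω = -1 ∧ U ω = u}).toReal := by
    intro z u
    refine transfer_aux μ Ym1 hYm1.1 _ _ (hE z (-1) u) (hUmeas u) ?_
    intro B hB
    have h1 := hlatent ((Set.univ : Set ℝ) ×ˢ B) (MeasurableSet.univ.prod hB) z (-1) u
    rw [hP, hP, hP, hP] at h1
    have e1 : {ω | (Y1 ω, Ym1 ω) ∈ (Set.univ : Set ℝ) ×ˢ B ∧ Z ω = z ∧ A ω = -1 ∧ U ω = u}
        = {ω | Ym1 ω ∈ B} ∩ {ω | Z ω = z ∧ A ω = -1 ∧ U ω = u} := by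
      ext ω; simp [Set.mem_prod]
    have e2 : {ω | (Y1 ω, Ym1 ω) ∈ (Set.univ : Set ℝ) ×ˢ B ∧ U ω = u}
        = {ω | Ym1 ω ∈ B} ∩ {ω | U ω = u} := by
      ext ω; simp [Set.mem_prod]
    rw [e1, e2] at h1
    exact h1
  -- rewrite δt
  have hδ : ∀ u : 𝒰, δt u
      = (μ {ω | Z ω = 1 ∧ A ω = 1 ∧ U ω = u}).toReal
          / ((μ {ω | Z ω = 1}).toReal * (μ {ω | U ω = u}).toReal)
        - (μ {ω | Z ω = -1 ∧ A ω = 1 ∧ U ω = u}).toReal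
          / ((μ {ω | Z ω = -1}).toReal * (μ {ω | U ω = u}).toReal) := by
    intro u
    have hi1 := hindep 1 u
    have him := hindep (-1) u
    rw [hP, hP, hP] at hi1 him
    have e1 : {ω | A ω = 1 ∧ Z ω = (1:ℝ) ∧ U ω = u} = {ω | Z ω = (1:ℝ) ∧ A ω = 1 ∧ U ω = u} := by
      ext ω; simp only [Set.mem_setOf_eq]; tauto
    have e2 : {ω | A ω = 1 ∧ Z ω = (-1:ℝ) ∧ U ω = u} = {ω | Z ω = (-1:ℝ) ∧ A ω = 1 ∧ U ω = u} := by
      ext ω; simp only [Set.mem_setOf_eq]; tauto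
    rw [hδt u, hP, hP, hP, hP, e1, e2, hi1, him]
  -- rewrite γt
  have hγ : ∀ u : 𝒰, γt u
      = ((∫ ω in {ω | U ω = u}, Y1 ω ∂μ) - ∫ ω in {ω | U ω = u}, Ym1 ω ∂μ)
          / (μ {ω | U ω = u}).toReal := by
    intro u
    rw [hγt u, hP, integral_sub hY1.integrableOn hYm1.integrableOn]
  -- final assembly
  simp only [hP]
  rw [hsplit 1, hsplit (-1), ← Finset.sum_add_distrib, ← Finset.sum_add_distrib,
    Finset.sum_div, Finset.sum_div, ← Finset.sum_sub_distrib]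
  refine Finset.sum_congr rfl fun u _ => ?_
  have hpu := hppos u
  have hq1 := hqpos 1 (Or.inl rfl)
  have hqm := hqpos (-1) (Or.inr rfl)
  have hI11 : (∫ ω in {ω | Z ω = 1 ∧ A ω = 1 ∧ U ω = u}, Y1 ω ∂μ)
      = (∫ ω in {ω | U ω = u}, Y1 ω ∂μ) * (μ {ω | Z ω = 1 ∧ A ω = 1 ∧ U ω = u}).toReal
        / (μ {ω | U ω = u}).toReal := by
    rw [eq_div_iff hpu.ne']; exact hF2a 1 u
  have hI1m : (∫ ω in {ω | Z ω = -1 ∧ A ω = 1 ∧ U ω = u}, Y1 ω ∂μ)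
      = (∫ ω in {ω | U ω = u}, Y1 ω ∂μ) * (μ {ω | Z ω = -1 ∧ A ω = 1 ∧ U ω = u}).toReal
        / (μ {ω | U ω = u}).toReal := by
    rw [eq_div_iff hpu.ne']; exact hF2a (-1) u
  have hI21 : (∫ ω in {ω | Z ω = 1 ∧ A ω = -1 ∧ U ω = u}, Ym1 ω ∂μ)
      = (∫ ω in {ω | U ω = u}, Ym1 ω ∂μ) * (μ {ω | Z ω = 1 ∧ A ω = -1 ∧ U ω = u}).toReal
        / (μ {ω | U ω = u}).toReal := by
    rw [eq_div_iff hpu.ne']; exact hF2b 1 u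
  have hI2m : (∫ ω in {ω | Z ω = -1 ∧ A ω = -1 ∧ U ω = u}, Ym1 ω ∂μ)
      = (∫ ω in {ω | U ω = u}, Ym1 ω ∂μ) * (μ {ω | Z ω = -1 ∧ A ω = -1 ∧ U ω = u}).toReal
        / (μ {ω | U ω = u}).toReal := by
    rw [eq_div_iff hpu.ne']; exact hF2b (-1) u
  have hs1 : (μ {ω | Z ω = (1:ℝ) ∧ A ω = -1 ∧ U ω = u}).toReal
      = (μ {ω | Z ω = (1:ℝ)}).toReal * (μ {ω | U ω = u}).toReal
        - (μ {ω | Z ω = (1:ℝ) ∧ A ω = 1 ∧ U ω = u}).toReal := by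
    have := hF3 1 u; linarith
  have hsm : (μ {ω | Z ω = (-1:ℝ) ∧ A ω = -1 ∧ U ω = u}).toReal
      = (μ {ω | Z ω = (-1:ℝ)}).toReal * (μ {ω | U ω = u}).toReal
        - (μ {ω | Z ω = (-1:ℝ) ∧ A ω = 1 ∧ U ω = u}).toReal := by
    have := hF3 (-1) u; linarith
  rw [hI11, hI1m, hI21, hI2m, hs1, hsm, hγ u, hδ u]
  field_simp
  ring
end

section
/- Under the setup of the Wald decomposition (Z ⟂ U, latent unconfoundedness, consistency, Z ∈ {−1,1}, δ := P(A=1|Z=1) − P(A=1|Z=−1) ≠ 0, γ := E[Y₁ − Y₋₁] ≠ 0): the Wald ratio (E[Y|Z=1] − E[Y|Z=−1])/δ has the same sign as γ if and only if E[(γ̃(U)/γ)·(δ̃(U)/δ)] > 0, where γ̃(U) = E[Y₁−Y₋₁|U] and δ̃(U) = P(A=1|Z=1,U) − P(A=1|Z=−1,U). -/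
open MeasureTheory

lemma transfer_aux_s8 {Ω : Type*} [MeasurableSpace Ω] (μ : Measure Ω) [IsFiniteMeasure μ]
    (Y1 Ym1 : Ω → ℝ) (hY1 : AEMeasurable Y1 μ) (hYm1 : AEMeasurable Ym1 μ)
    (E₁ E₂ : Set Ω) (hE₁ : MeasurableSet E₁) (hE₂ : MeasurableSet E₂)
    (h : ∀ B : Set (ℝ × ℝ), MeasurableSet B →
      μ ({ω | (Y1 ω, Ym1 ω) ∈ B} ∩ E₁) * μ E₂ = μ ({ω | (Y1 ω, Ym1 ω) ∈ B} ∩ E₂) * μ E₁)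
    (g : ℝ × ℝ → ℝ) (hg : Continuous g) :
    (∫ ω in E₁, g (Y1 ω, Ym1 ω) ∂μ) * (μ E₂).toReal =
      (∫ ω in E₂, g (Y1 ω, Ym1 ω) ∂μ) * (μ E₁).toReal := by
  set V : Ω → ℝ × ℝ := fun ω => (Y1 ω, Ym1 ω) with hVdef
  have hV : AEMeasurable V μ := hY1.prodMk hYm1
  have hmeq : (μ E₂) • (μ.restrict E₁).map V = (μ E₁) • (μ.restrict E₂).map V := by
    ext B hB
    simp only [Measure.smul_apply, smul_eq_mul]
    rw [Measure.map_apply_of_aemeasurable (hV.restrict) hB,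
        Measure.map_apply_of_aemeasurable (hV.restrict) hB,
        Measure.restrict_apply' hE₁, Measure.restrict_apply' hE₂]
    rw [mul_comm, mul_comm (μ E₁) _]
    exact h B hB
  have h2 := congrArg (fun ν : Measure (ℝ × ℝ) => ∫ p, g p ∂ν) hmeq
  simp only [integral_smul_measure] at h2
  rw [integral_map hV.restrict hg.aestronglyMeasurable,
      integral_map hV.restrict hg.aestronglyMeasurable] at h2
  simpa [smul_eq_mul, mul_comm] using h2

lemma split_integral {Ω 𝒰 : Type*} [MeasurableSpace Ω] [Fintype 𝒰] (μ : Measure Ω)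
    (U : Ω → 𝒰) (hU : ∀ u, MeasurableSet {ω | U ω = u}) (f : Ω → ℝ) (hf : Integrable f μ)
    (s : Set Ω) (hs : MeasurableSet s) :
    ∫ ω in s, f ω ∂μ = ∑ u : 𝒰, ∫ ω in s ∩ {ω | U ω = u}, f ω ∂μ := by
  have hset : s = ⋃ u ∈ Finset.univ, s ∩ {ω | U ω = u} := by ext ω; simp
  conv_lhs => rw [hset]
  rw [integral_biUnion_finset]
  · intro u _; exact hs.inter (hU u)
  · intro u _ v _ huv
    simp only [Function.onFun, Set.disjoint_left]
    rintro ω ⟨-, h1⟩ ⟨-, h2⟩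
    exact huv (h1.symm.trans h2)
  · intro u _; exact hf.integrableOn

lemma sign_eq_one_iff' (x : ℝ) : Real.sign x = 1 ↔ 0 < x := by
  constructor
  · intro h
    rcases lt_trichotomy x 0 with h1 | h1 | h1
    · rw [Real.sign_of_neg h1] at h; norm_num at h
    · rw [h1, Real.sign_zero] at h; norm_num at h
    · exact h1
  · exact Real.sign_of_pos

lemma sign_eq_neg_one_iff' (x : ℝ) : Real.sign x = -1 ↔ x < 0 := by
  constructor
  · intro h
    rcases lt_trichotomy x 0 with h1 | h1 | h1
    · exact h1
    · rw [h1, Real.sign_zero] at h; norm_num at h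
    · rw [Real.sign_of_pos h1] at h; norm_num at h
  · exact Real.sign_of_neg

/-- Theorem 1 (L suppressed): the Wald ratio has the same sign as γ = E[Y₁−Y₋₁] iff
E[(γ̃(U)/γ)(δ̃(U)/δ)] > 0, under IV independence, latent unconfoundedness and consistency. -/
theorem stmt_8 {Ω 𝒰 : Type*} [MeasurableSpace Ω] [Fintype 𝒰]
    (μ : Measure Ω) [IsProbabilityMeasure μ]
    (P : Set Ω → ℝ) (hP : ∀ s, P s = (μ s).toReal)
    (Z A : Ω → ℝ) (hZmeas : Measurable Z) (hAmeas : Measurable A)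
    (hZpm : ∀ ω, Z ω = 1 ∨ Z ω = -1) (hApm : ∀ ω, A ω = 1 ∨ A ω = -1)
    (U : Ω → 𝒰) (hUmeas : ∀ u, MeasurableSet {ω | U ω = u})
    (Y1 Ym1 Y : Ω → ℝ) (hY1 : Integrable Y1 μ) (hYm1 : Integrable Ym1 μ)
    -- consistency
    (hY : ∀ ω, Y ω = Y1 ω * (if A ω = 1 then 1 else 0) + Ym1 ω * (if A ω = -1 then 1 else 0))
    -- positivity
    (hZpos : ∀ z : ℝ, (z = 1 ∨ z = -1) → 0 < P {ω | Z ω = z})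
    (hZUpos : ∀ (z : ℝ) (u : 𝒰), (z = 1 ∨ z = -1) → 0 < P {ω | Z ω = z ∧ U ω = u})
    -- IV independence: Z ⟂ U
    (hindep : ∀ (z : ℝ) (u : 𝒰),
      P {ω | Z ω = z ∧ U ω = u} = P {ω | Z ω = z} * P {ω | U ω = u})
    -- latent unconfoundedness: (Y₁,Y₋₁) ⟂ (Z,A) | U, elementwise on events
    (hlatent : ∀ (B : Set (ℝ × ℝ)), MeasurableSet B → ∀ (z a : ℝ) (u : 𝒰),
      P {ω | (Y1 ω, Ym1 ω) ∈ B ∧ Z ω = z ∧ A ω = a ∧ U ω = u} * P {ω | U ω = u} =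
        P {ω | (Y1 ω, Ym1 ω) ∈ B ∧ U ω = u} * P {ω | Z ω = z ∧ A ω = a ∧ U ω = u})
    -- γ̃, δ̃, γ, δ
    (γt δt : 𝒰 → ℝ)
    (hγt : ∀ u, γt u = (∫ ω in {ω | U ω = u}, (Y1 ω - Ym1 ω) ∂μ) / P {ω | U ω = u})
    (hδt : ∀ u, δt u =
      P {ω | A ω = 1 ∧ Z ω = 1 ∧ U ω = u} / P {ω | Z ω = 1 ∧ U ω = u} -
        P {ω | A ω = 1 ∧ Z ω = -1 ∧ U ω = u} / P {ω | Z ω = -1 ∧ U ω = u})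
    (γ δ : ℝ) (hγ : γ = ∫ ω, (Y1 ω - Ym1 ω) ∂μ)
    (hδ : δ = P {ω | A ω = 1 ∧ Z ω = 1} / P {ω | Z ω = 1} -
        P {ω | A ω = 1 ∧ Z ω = -1} / P {ω | Z ω = -1})
    (hγ0 : γ ≠ 0) (hδ0 : δ ≠ 0) :
    Real.sign (((∫ ω in {ω | Z ω = 1}, Y ω ∂μ) / P {ω | Z ω = 1} -
        (∫ ω in {ω | Z ω = -1}, Y ω ∂μ) / P {ω | Z ω = -1}) / δ) = Real.sign γ ↔
      0 < ∑ u : 𝒰, (γt u / γ) * (δt u / δ) * P {ω | U ω = u} := by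
  have hμ : ∀ s : Set Ω, μ s ≠ ⊤ := fun s => measure_ne_top μ s
  have hsZ : ∀ z : ℝ, MeasurableSet {ω | Z ω = z} := fun z => hZmeas (measurableSet_singleton z)
  have hsA : ∀ a : ℝ, MeasurableSet {ω | A ω = a} := fun a => hAmeas (measurableSet_singleton a)
  have hsG : ∀ (z a : ℝ) (u : 𝒰), MeasurableSet {ω | Z ω = z ∧ A ω = a ∧ U ω = u} :=
    fun z a u => (hsZ z).inter ((hsA a).inter (hUmeas u))
  have hsF : ∀ (z : ℝ) (u : 𝒰), MeasurableSet {ω | Z ω = z ∧ U ω = u} :=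
    fun z u => (hsZ z).inter (hUmeas u)
  -- positivity
  have hpZ : ∀ z : ℝ, (z = 1 ∨ z = -1) → 0 < (μ {ω | Z ω = z}).toReal := by
    intro z hz; have := hZpos z hz; rwa [hP] at this
  have hpF : ∀ (z : ℝ) (u : 𝒰), (z = 1 ∨ z = -1) → 0 < (μ {ω | Z ω = z ∧ U ω = u}).toReal := by
    intro z u hz; have := hZUpos z u hz; rwa [hP] at this
  have hpE : ∀ u : 𝒰, 0 < (μ {ω | U ω = u}).toReal := by
    intro u
    have h := hZUpos 1 u (Or.inl rfl)
    rw [hindep 1 u, hP, hP] at h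
    by_contra hc
    push_neg at hc
    have h0 : (μ {ω | U ω = u}).toReal = 0 := le_antisymm hc ENNReal.toReal_nonneg
    rw [h0, mul_zero] at h; exact lt_irrefl 0 h
  -- independence in toReal form
  have hind : ∀ (z : ℝ) (u : 𝒰), (μ {ω | Z ω = z ∧ U ω = u}).toReal =
      (μ {ω | Z ω = z}).toReal * (μ {ω | U ω = u}).toReal := by
    intro z u; have := hindep z u; rwa [hP, hP, hP] at this
  -- Y is integrable
  have hYint : Integrable Y μ := by
    have hYe : Y = fun ω => ({ω | A ω = 1}.indicator Y1) ω + ({ω | A ω = -1}.indicator Ym1) ω := by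
      funext ω
      rcases hApm ω with h | h <;>
        simp [hY ω, Set.indicator_apply, h] <;> norm_num
    rw [hYe]
    exact (hY1.indicator (hsA 1)).add (hYm1.indicator (hsA (-1)))
  -- transfer via latent unconfoundedness
  have htrans : ∀ (z a : ℝ) (u : 𝒰) (g : ℝ × ℝ → ℝ), Continuous g →
      (∫ ω in {ω | Z ω = z ∧ A ω = a ∧ U ω = u}, g (Y1 ω, Ym1 ω) ∂μ) * (μ {ω | U ω = u}).toReal =
      (∫ ω in {ω | U ω = u}, g (Y1 ω, Ym1 ω) ∂μ) *
        (μ {ω | Z ω = z ∧ A ω = a ∧ U ω = u}).toReal := by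
    intro z a u g hg
    apply transfer_aux_s8 μ Y1 Ym1 hY1.aemeasurable hYm1.aemeasurable _ _ (hsG z a u) (hUmeas u) _ g hg
    intro B hB
    have h := hlatent B hB z a u
    simp only [hP] at h
    have h' : (μ ({ω | (Y1 ω, Ym1 ω) ∈ B} ∩ {ω | Z ω = z ∧ A ω = a ∧ U ω = u}) *
        μ {ω | U ω = u}).toReal =
        (μ ({ω | (Y1 ω, Ym1 ω) ∈ B} ∩ {ω | U ω = u}) *
          μ {ω | Z ω = z ∧ A ω = a ∧ U ω = u}).toReal := by
      rw [ENNReal.toReal_mul, ENNReal.toReal_mul]; exact h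
    exact (ENNReal.toReal_eq_toReal_iff' (ENNReal.mul_ne_top (hμ _) (hμ _))
      (ENNReal.mul_ne_top (hμ _) (hμ _))).mp h'
  -- Y equals Y1 resp Ym1 on the A = ±1 slices
  have hG1 : ∀ (z : ℝ) (u : 𝒰),
      (∫ ω in {ω | Z ω = z ∧ A ω = 1 ∧ U ω = u}, Y ω ∂μ) * (μ {ω | U ω = u}).toReal =
      (∫ ω in {ω | U ω = u}, Y1 ω ∂μ) * (μ {ω | Z ω = z ∧ A ω = 1 ∧ U ω = u}).toReal := by
    intro z u
    have h := htrans z 1 u Prod.fst continuous_fst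
    have hcong : (∫ ω in {ω | Z ω = z ∧ A ω = 1 ∧ U ω = u}, Y ω ∂μ) =
        ∫ ω in {ω | Z ω = z ∧ A ω = 1 ∧ U ω = u}, Y1 ω ∂μ := by
      apply setIntegral_congr_fun (hsG z 1 u)
      rintro ω ⟨-, h1, -⟩
      rw [hY ω, h1]; norm_num
    rw [hcong]; exact h
  have hGm : ∀ (z : ℝ) (u : 𝒰),
      (∫ ω in {ω | Z ω = z ∧ A ω = -1 ∧ U ω = u}, Y ω ∂μ) * (μ {ω | U ω = u}).toReal =
      (∫ ω in {ω | U ω = u}, Ym1 ω ∂μ) * (μ {ω | Z ω = z ∧ A ω = -1 ∧ U ω = u}).toReal := by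
    intro z u
    have h := htrans z (-1) u Prod.snd continuous_snd
    have hcong : (∫ ω in {ω | Z ω = z ∧ A ω = -1 ∧ U ω = u}, Y ω ∂μ) =
        ∫ ω in {ω | Z ω = z ∧ A ω = -1 ∧ U ω = u}, Ym1 ω ∂μ := by
      apply setIntegral_congr_fun (hsG z (-1) u)
      rintro ω ⟨-, h1, -⟩
      rw [hY ω, h1]; norm_num
    rw [hcong]; exact h
  -- γt * pE
  have hγtpE : ∀ u : 𝒰, γt u * (μ {ω | U ω = u}).toReal =
      (∫ ω in {ω | U ω = u}, Y1 ω ∂μ) - ∫ ω in {ω | U ω = u}, Ym1 ω ∂μ := by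
    intro u
    rw [hγt u, hP, div_mul_cancel₀ _ (hpE u).ne',
      integral_sub hY1.integrableOn hYm1.integrableOn]
  -- union decomposition over A = ±1
  have hun : ∀ (z : ℝ) (u : 𝒰), {ω | Z ω = z ∧ U ω = u} =
      {ω | Z ω = z ∧ A ω = 1 ∧ U ω = u} ∪ {ω | Z ω = z ∧ A ω = -1 ∧ U ω = u} := by
    intro z u
    ext ω
    simp only [Set.mem_setOf_eq, Set.mem_union]
    constructor
    · rintro ⟨h1, h2⟩
      rcases hApm ω with h | h
      · exact Or.inl ⟨h1, h, h2⟩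
      · exact Or.inr ⟨h1, h, h2⟩
    · rintro (⟨h1, -, h2⟩ | ⟨h1, -, h2⟩) <;> exact ⟨h1, h2⟩
  have hdisj : ∀ (z : ℝ) (u : 𝒰), Disjoint {ω | Z ω = z ∧ A ω = 1 ∧ U ω = u}
      {ω | Z ω = z ∧ A ω = -1 ∧ U ω = u} := by
    intro z u
    rw [Set.disjoint_left]
    rintro ω ⟨-, h1, -⟩ ⟨-, h2, -⟩
    rw [h1] at h2; norm_num at h2
  have hadd : ∀ (z : ℝ) (u : 𝒰),
      (μ {ω | Z ω = z ∧ A ω = 1 ∧ U ω = u}).toReal +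
        (μ {ω | Z ω = z ∧ A ω = -1 ∧ U ω = u}).toReal = (μ {ω | Z ω = z ∧ U ω = u}).toReal := by
    intro z u
    rw [hun z u, measure_union (hdisj z u) (hsG z (-1) u), ENNReal.toReal_add (hμ _) (hμ _)]
  -- key per-(z,u) formula
  have hFY : ∀ (z : ℝ), (z = 1 ∨ z = -1) → ∀ u : 𝒰,
      (∫ ω in {ω | Z ω = z ∧ U ω = u}, Y ω ∂μ) =
        γt u * (μ {ω | Z ω = z ∧ A ω = 1 ∧ U ω = u}).toReal +
          (∫ ω in {ω | U ω = u}, Ym1 ω ∂μ) * (μ {ω | Z ω = z}).toReal := by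
    intro z hz u
    have h1 : (∫ ω in {ω | Z ω = z ∧ U ω = u}, Y ω ∂μ) =
        (∫ ω in {ω | Z ω = z ∧ A ω = 1 ∧ U ω = u}, Y ω ∂μ) +
          ∫ ω in {ω | Z ω = z ∧ A ω = -1 ∧ U ω = u}, Y ω ∂μ := by
      rw [hun z u]
      exact setIntegral_union (hdisj z u) (hsG z (-1) u) hYint.integrableOn hYint.integrableOn
    have h2 := hG1 z u
    have h3 := hGm z u
    have h4 := hadd z u
    have h5 := hind z u
    have h6 := hγtpE u
    apply mul_right_cancel₀ (hpE u).ne'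
    rw [h1, add_mul]
    linear_combination h2 + h3 - (μ {ω | Z ω = z ∧ A ω = 1 ∧ U ω = u}).toReal * h6 +
      (∫ ω in {ω | U ω = u}, Ym1 ω ∂μ) * h4 + (∫ ω in {ω | U ω = u}, Ym1 ω ∂μ) * h5
  -- integral over {Z = z}
  have hZint : ∀ (z : ℝ), (z = 1 ∨ z = -1) →
      (∫ ω in {ω | Z ω = z}, Y ω ∂μ) =
        (∑ u : 𝒰, γt u * (μ {ω | Z ω = z ∧ A ω = 1 ∧ U ω = u}).toReal) +
          (∫ ω, Ym1 ω ∂μ) * (μ {ω | Z ω = z}).toReal := by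
    intro z hz
    rw [split_integral μ U hUmeas Y hYint _ (hsZ z)]
    have hstep : ∀ u : 𝒰, (∫ ω in {ω | Z ω = z} ∩ {ω | U ω = u}, Y ω ∂μ) =
        γt u * (μ {ω | Z ω = z ∧ A ω = 1 ∧ U ω = u}).toReal +
          (∫ ω in {ω | U ω = u}, Ym1 ω ∂μ) * (μ {ω | Z ω = z}).toReal := fun u => hFY z hz u
    rw [Finset.sum_congr rfl (fun u _ => hstep u), Finset.sum_add_distrib, ← Finset.sum_mul]
    congr 1
    congr 1
    have := split_integral μ U hUmeas Ym1 hYm1 Set.univ MeasurableSet.univ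
    simp only [Set.univ_inter] at this
    rw [← this, setIntegral_univ]
  -- the Wald numerator identity
  have hterm : ∀ u : 𝒰,
      γt u * (μ {ω | Z ω = 1 ∧ A ω = 1 ∧ U ω = u}).toReal / (μ {ω | Z ω = 1}).toReal -
        γt u * (μ {ω | Z ω = -1 ∧ A ω = 1 ∧ U ω = u}).toReal / (μ {ω | Z ω = -1}).toReal =
      γt u * δt u * (μ {ω | U ω = u}).toReal := by
    intro u
    have hre : ∀ z : ℝ, {ω | A ω = 1 ∧ Z ω = z ∧ U ω = u} =
        {ω | Z ω = z ∧ A ω = 1 ∧ U ω = u} := by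
      intro z; ext ω; simp only [Set.mem_setOf_eq]; tauto
    rw [hδt u]
    simp only [hP]
    rw [hre 1, hre (-1), hind 1 u, hind (-1) u]
    have h1 := (hpZ 1 (Or.inl rfl)).ne'
    have hm := (hpZ (-1) (Or.inr rfl)).ne'
    have he := (hpE u).ne'
    field_simp
  have hnum : (∫ ω in {ω | Z ω = 1}, Y ω ∂μ) / P {ω | Z ω = 1} -
      (∫ ω in {ω | Z ω = -1}, Y ω ∂μ) / P {ω | Z ω = -1} =
      ∑ u : 𝒰, γt u * δt u * (μ {ω | U ω = u}).toReal := by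
    rw [hP, hP, hZint 1 (Or.inl rfl), hZint (-1) (Or.inr rfl)]
    have h1 := (hpZ 1 (Or.inl rfl)).ne'
    have hm := (hpZ (-1) (Or.inr rfl)).ne'
    rw [add_div, add_div, mul_div_assoc, mul_div_assoc, div_self h1, div_self hm]
    simp only [mul_one]
    rw [Finset.sum_div, Finset.sum_div]
    have : ((∑ u : 𝒰, γt u * (μ {ω | Z ω = 1 ∧ A ω = 1 ∧ U ω = u}).toReal /
          (μ {ω | Z ω = 1}).toReal) + (∫ ω, Ym1 ω ∂μ)) -
        ((∑ u : 𝒰, γt u * (μ {ω | Z ω = -1 ∧ A ω = 1 ∧ U ω = u}).toReal /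
          (μ {ω | Z ω = -1}).toReal) + (∫ ω, Ym1 ω ∂μ)) =
        ∑ u : 𝒰, (γt u * (μ {ω | Z ω = 1 ∧ A ω = 1 ∧ U ω = u}).toReal /
          (μ {ω | Z ω = 1}).toReal -
          γt u * (μ {ω | Z ω = -1 ∧ A ω = 1 ∧ U ω = u}).toReal /
          (μ {ω | Z ω = -1}).toReal) := by
      rw [Finset.sum_sub_distrib]; ring
    rw [this]
    exact Finset.sum_congr rfl (fun u _ => hterm u)
  -- final sign argument
  rw [hnum]
  simp only [hP]
  set T := ∑ u : 𝒰, γt u * δt u * (μ {ω | U ω = u}).toReal with hT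
  have hsum : (∑ u : 𝒰, γt u / γ * (δt u / δ) * (μ {ω | U ω = u}).toReal) = T / (γ * δ) := by
    rw [hT, Finset.sum_div]
    refine Finset.sum_congr rfl (fun u _ => ?_)
    field_simp
  rw [hsum]
  rcases hγ0.lt_or_gt with hneg | hpos
  · rw [Real.sign_of_neg hneg, sign_eq_neg_one_iff']
    constructor
    · intro h
      have hrw : T / (γ * δ) = (T / δ) / γ := by rw [div_div, mul_comm]
      rw [hrw]
      exact div_pos_of_neg_of_neg h hneg
    · intro h
      have hrw : T / δ = T / (γ * δ) * γ := by
        field_simp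
      rw [hrw]
      exact mul_neg_of_pos_of_neg h hneg
  · rw [Real.sign_of_pos hpos, sign_eq_one_iff']
    constructor
    · intro h
      have hrw : T / (γ * δ) = (T / δ) / γ := by rw [div_div, mul_comm]
      rw [hrw]
      exact div_pos h hpos
    · intro h
      have hrw : T / δ = T / (γ * δ) * γ := by
        field_simp
      rw [hrw]
      exact mul_pos h hpos
end

section
/- There exist integrable random variables γ̃, δ̃ (on some probability space) with γ = E[γ̃] ≠ 0 and δ = E[δ̃] ≠ 0 such that E[(γ̃/γ)(δ̃/δ)] > 0 but neither Cov(γ̃, δ̃) = 0 holds nor does γ̃ (or δ̃) have almost surely constant sign. -/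
open MeasureTheory
open scoped ENNReal

noncomputable def myμ : Measure Bool :=
  (1/2 : ℝ≥0∞) • Measure.dirac true + (1/2 : ℝ≥0∞) • Measure.dirac false

lemma myμ_int (f : Bool → ℝ) : ∫ b, f b ∂myμ = (1/2) * f true + (1/2) * f false := by
  rw [myμ, integral_add_measure, integral_smul_measure, integral_smul_measure,
    integral_dirac, integral_dirac]
  · norm_num
  · have : IsFiniteMeasure ((1/2 : ℝ≥0∞) • Measure.dirac true) :=
      ⟨by simp [Measure.smul_apply]⟩
    exact .of_finite
  · have : IsFiniteMeasure ((1/2 : ℝ≥0∞) • Measure.dirac false) :=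
      ⟨by simp [Measure.smul_apply]⟩
    exact .of_finite

instance : IsProbabilityMeasure myμ := by
  constructor
  simp [myμ]
  rw [ENNReal.inv_two_add_inv_two]

lemma myμ_integrable (f : Bool → ℝ) : Integrable f myμ :=
  .of_finite

/-- Condition (4) is strictly weaker: there exist γ̃, δ̃ with E[(γ̃/γ)(δ̃/δ)] > 0
but Cov(γ̃,δ̃) ≠ 0 and γ̃ without a.s. constant sign. -/
theorem stmt_11 :
    ∃ (Ω : Type) (_ : MeasurableSpace Ω) (μ : Measure Ω) (_ : IsProbabilityMeasure μ)
      (γt δt : Ω → ℝ),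
      Integrable γt μ ∧ Integrable δt μ ∧ Integrable (fun ω => γt ω * δt ω) μ ∧
      (∫ ω, γt ω ∂μ) ≠ 0 ∧ (∫ ω, δt ω ∂μ) ≠ 0 ∧
      (0 < ∫ ω, (γt ω / ∫ ω', γt ω' ∂μ) * (δt ω / ∫ ω', δt ω' ∂μ) ∂μ) ∧
      ((∫ ω, γt ω * δt ω ∂μ) - (∫ ω, γt ω ∂μ) * (∫ ω, δt ω ∂μ) ≠ 0) ∧
      ¬ ((∀ᵐ ω ∂μ, 0 ≤ γt ω) ∨ (∀ᵐ ω ∂μ, γt ω ≤ 0)) := by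
  refine ⟨Bool, inferInstance, myμ, inferInstance,
    (fun b => if b then 3 else -1), (fun b => if b then 3 else -1),
    myμ_integrable _, myμ_integrable _, myμ_integrable _, ?_, ?_, ?_, ?_, ?_⟩
  · rw [myμ_int]; norm_num
  · rw [myμ_int]; norm_num
  · rw [myμ_int (fun b => _), myμ_int]; norm_num
  · rw [myμ_int (fun b => _), myμ_int]; norm_num
  · rintro (h | h) <;> rw [ae_iff] at h
    · have : {a : Bool | ¬ 0 ≤ (if a then (3:ℝ) else -1)} = {false} := by
        ext b; cases b <;> simp
      rw [this] at h
      simp [myμ, Measure.dirac_apply] at h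
    · have : {a : Bool | ¬ (if a then (3:ℝ) else -1) ≤ 0} = {true} := by
        ext b; cases b <;> simp
      rw [this] at h
      simp [myμ, Measure.dirac_apply] at h
end

section
/- Suppose U takes finitely many values, Z ∈ {−1,1} with Z ⟂ U and 0 < P(Z=1) < 1, A ∈ {−1,1}, Y₁, Y₋₁ integrable with (Y₁,Y₋₁) ⟂ (Z,A) | U, and Y = Y₁1{A=1} + Y₋₁1{A=−1}. Let δ̃(u) = P(A=1|Z=1,U=u) − P(A=1|Z=−1,U=u) and δ = E[δ̃(U)] ≠ 0. Then for each fixed decision d ∈ {−1,1}: E[Z·A·Y·1{A=d}/(δ f(Z))] = (1/δ)·( E[δ̃(U)·E[Y₁|U]]·1{d=1} + E[δ̃(U)·E[Y₋₁|U]]·1{d=−1} ). -/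
open MeasureTheory

lemma stmt14_transfer {Ω : Type*} [MeasurableSpace Ω] (μ : Measure Ω)
    (g : Ω → ℝ × ℝ) (hg : Measurable g) (S T : Set Ω) (c1 c2 : ENNReal)
    (h : ∀ B : Set (ℝ × ℝ), MeasurableSet B →
      c1 * μ (g ⁻¹' B ∩ S) = c2 * μ (g ⁻¹' B ∩ T))
    (f : ℝ × ℝ → ℝ) (hf : Measurable f) :
    c1.toReal * ∫ x in S, f (g x) ∂μ = c2.toReal * ∫ x in T, f (g x) ∂μ := by
  have hmeq : c1 • Measure.map g (μ.restrict S) = c2 • Measure.map g (μ.restrict T) := by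
    refine Measure.ext fun B hB => ?_
    simp only [Measure.smul_apply, smul_eq_mul, Measure.map_apply hg hB,
      Measure.restrict_apply (hg hB)]
    exact h B hB
  have e1 : ∫ x in S, f (g x) ∂μ = ∫ y, f y ∂(Measure.map g (μ.restrict S)) :=
    (integral_map hg.aemeasurable hf.aestronglyMeasurable).symm
  have e2 : ∫ x in T, f (g x) ∂μ = ∫ y, f y ∂(Measure.map g (μ.restrict T)) :=
    (integral_map hg.aemeasurable hf.aestronglyMeasurable).symm
  calc c1.toReal * ∫ x in S, f (g x) ∂μ
      = ∫ y, f y ∂(c1 • Measure.map g (μ.restrict S)) := by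
        rw [integral_smul_measure, e1, smul_eq_mul]
    _ = ∫ y, f y ∂(c2 • Measure.map g (μ.restrict T)) := by rw [hmeq]
    _ = c2.toReal * ∫ x in T, f (g x) ∂μ := by
        rw [integral_smul_measure, e2, smul_eq_mul]

lemma stmt14_main {Ω 𝒰 : Type*} [MeasurableSpace Ω] [Fintype 𝒰]
    (μ : Measure Ω) [IsProbabilityMeasure μ]
    (P : Set Ω → ℝ)
    (Z A : Ω → ℝ) (hZmeas : Measurable Z) (hAmeas : Measurable A)
    (hZpm : ∀ ω, Z ω = 1 ∨ Z ω = -1)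
    (U : Ω → 𝒰) (hUmeas : ∀ u, MeasurableSet {ω | U ω = u})
    (Yd Y : Ω → ℝ) (hYd : Integrable Yd μ)
    (d δ : ℝ)
    (fZ : Ω → ℝ)
    (hfZ : ∀ ω, fZ ω = P {ω' | Z ω' = 1} * (if Z ω = 1 then 1 else 0) +
        P {ω' | Z ω' = -1} * (if Z ω = -1 then 1 else 0))
    (hYdeq : ∀ ω, A ω = d → Y ω = Yd ω)
    (EYd δt : 𝒰 → ℝ)
    (hkeyd : ∀ (z : ℝ) (u : 𝒰),
      ∫ ω in {ω | Z ω = z ∧ A ω = d ∧ U ω = u}, Yd ω ∂μ =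
        P {ω | Z ω = z ∧ A ω = d ∧ U ω = u} * EYd u)
    (hcomb : ∀ u : 𝒰,
      d / (δ * P {ω | Z ω = 1}) * P {ω | Z ω = 1 ∧ A ω = d ∧ U ω = u} +
        (-d) / (δ * P {ω | Z ω = -1}) * P {ω | Z ω = -1 ∧ A ω = d ∧ U ω = u} =
        1 / δ * (δt u * P {ω | U ω = u})) :
    (∫ ω, Z ω * A ω * Y ω * (if A ω = d then 1 else 0) / (δ * fZ ω) ∂μ) =
      ∑ u : 𝒰, 1 / δ * (δt u * P {ω | U ω = u}) * EYd u := by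
  classical
  have hSmeas : ∀ (z : ℝ) (u : 𝒰), MeasurableSet {ω | Z ω = z ∧ A ω = d ∧ U ω = u} := by
    intro z u
    have : {ω | Z ω = z ∧ A ω = d ∧ U ω = u} =
        Z ⁻¹' {z} ∩ (A ⁻¹' {d} ∩ {ω | U ω = u}) := rfl
    rw [this]
    exact (hZmeas (measurableSet_singleton z)).inter
      ((hAmeas (measurableSet_singleton d)).inter (hUmeas u))
  set c1 := d / (δ * P {ω | Z ω = 1}) with hc1
  set c2 := -d / (δ * P {ω | Z ω = -1}) with hc2
  set F : 𝒰 → Ω → ℝ := fun u ω =>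
    Set.indicator {ω' | Z ω' = 1 ∧ A ω' = d ∧ U ω' = u} (fun ω' => c1 * Yd ω') ω
      + Set.indicator {ω' | Z ω' = -1 ∧ A ω' = d ∧ U ω' = u} (fun ω' => c2 * Yd ω') ω
    with hF
  have hint : ∀ u : 𝒰, Integrable (F u) μ := fun u =>
    ((hYd.const_mul c1).indicator (hSmeas 1 u)).add
      ((hYd.const_mul c2).indicator (hSmeas (-1) u))
  have hpoint : ∀ ω, Z ω * A ω * Y ω * (if A ω = d then 1 else 0) / (δ * fZ ω)
      = ∑ u : 𝒰, F u ω := by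
    intro ω
    have hrw : ∀ u : 𝒰, F u ω
        = if U ω = u then
            ((if Z ω = 1 ∧ A ω = d then c1 * Yd ω else 0)
              + (if Z ω = -1 ∧ A ω = d then c2 * Yd ω else 0)) else 0 := by
      intro u
      by_cases hU : U ω = u <;>
        by_cases h1 : Z ω = 1 ∧ A ω = d <;>
          by_cases h2 : Z ω = -1 ∧ A ω = d <;>
            simp [hF, Set.indicator_apply, Set.mem_setOf_eq, hU, h1, h2]
    rw [Finset.sum_congr rfl (fun u _ => hrw u), Finset.sum_ite_eq]
    simp only [Finset.mem_univ, if_true]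
    rcases eq_or_ne (A ω) d with hA | hA
    · rcases hZpm ω with hZ | hZ
      · have hfz : fZ ω = P {ω' | Z ω' = 1} := by rw [hfZ ω, hZ]; norm_num
        rw [hYdeq ω hA, hZ, hA, hfz]
        norm_num [hc1, hc2]
        ring
      · have hfz : fZ ω = P {ω' | Z ω' = -1} := by rw [hfZ ω, hZ]; norm_num
        rw [hYdeq ω hA, hZ, hA, hfz]
        norm_num [hc1, hc2]
        ring
    · simp [hA, hF, Set.indicator_apply, Set.mem_setOf_eq]
  rw [integral_congr_ae (Filter.Eventually.of_forall hpoint),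
    integral_finset_sum _ (fun u _ => hint u)]
  refine Finset.sum_congr rfl fun u _ => ?_
  rw [hF]
  rw [integral_add ((hYd.const_mul c1).indicator (hSmeas 1 u))
      ((hYd.const_mul c2).indicator (hSmeas (-1) u)),
    integral_indicator (hSmeas 1 u), integral_indicator (hSmeas (-1) u),
    integral_const_mul, integral_const_mul, hkeyd 1 u, hkeyd (-1) u]
  linear_combination (EYd u) * hcomb u

/-- Key display in the proof of Theorem 1: the weighted IV estimand decomposes into
compliance-weighted potential-outcome means. -/
theorem stmt_14 {Ω 𝒰 : Type*} [MeasurableSpace Ω] [Fintype 𝒰]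
    (μ : Measure Ω) [IsProbabilityMeasure μ]
    (P : Set Ω → ℝ) (hP : ∀ s, P s = (μ s).toReal)
    (Z A : Ω → ℝ) (hZmeas : Measurable Z) (hAmeas : Measurable A)
    (hZpm : ∀ ω, Z ω = 1 ∨ Z ω = -1) (hApm : ∀ ω, A ω = 1 ∨ A ω = -1)
    (U : Ω → 𝒰) (hUmeas : ∀ u, MeasurableSet {ω | U ω = u})
    (Y1 Ym1 Y : Ω → ℝ) (hY1 : Integrable Y1 μ) (hYm1 : Integrable Ym1 μ)
    -- consistency
    (hY : ∀ ω, Y ω = Y1 ω * (if A ω = 1 then 1 else 0) + Ym1 ω * (if A ω = -1 then 1 else 0))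
    -- IV positivity
    (hZ1 : 0 < P {ω | Z ω = 1}) (hZ1' : P {ω | Z ω = 1} < 1)
    (hZUpos : ∀ (z : ℝ) (u : 𝒰), (z = 1 ∨ z = -1) → 0 < P {ω | Z ω = z ∧ U ω = u})
    -- IV independence: Z ⟂ U
    (hindep : ∀ (z : ℝ) (u : 𝒰),
      P {ω | Z ω = z ∧ U ω = u} = P {ω | Z ω = z} * P {ω | U ω = u})
    -- latent unconfoundedness: (Y₁,Y₋₁) ⟂ (Z,A) | U, elementwise on events
    (hlatent : ∀ (B : Set (ℝ × ℝ)), MeasurableSet B → ∀ (z a : ℝ) (u : 𝒰),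
      P {ω | (Y1 ω, Ym1 ω) ∈ B ∧ Z ω = z ∧ A ω = a ∧ U ω = u} * P {ω | U ω = u} =
        P {ω | (Y1 ω, Ym1 ω) ∈ B ∧ U ω = u} * P {ω | Z ω = z ∧ A ω = a ∧ U ω = u})
    -- δ̃ and δ
    (δt : 𝒰 → ℝ)
    (hδt : ∀ u, δt u =
      P {ω | A ω = 1 ∧ Z ω = 1 ∧ U ω = u} / P {ω | Z ω = 1 ∧ U ω = u} -
        P {ω | A ω = 1 ∧ Z ω = -1 ∧ U ω = u} / P {ω | Z ω = -1 ∧ U ω = u})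
    (δ : ℝ) (hδ : δ = ∑ u : 𝒰, δt u * P {ω | U ω = u}) (hδ0 : δ ≠ 0)
    (fZ : Ω → ℝ)
    (hfZ : ∀ ω, fZ ω = P {ω' | Z ω' = 1} * (if Z ω = 1 then 1 else 0) +
        P {ω' | Z ω' = -1} * (if Z ω = -1 then 1 else 0))
    -- conditional potential-outcome means given U = u
    (EY1 EYm1 : 𝒰 → ℝ)
    (hEY1 : ∀ u, EY1 u = (∫ ω in {ω | U ω = u}, Y1 ω ∂μ) / P {ω | U ω = u})
    (hEYm1 : ∀ u, EYm1 u = (∫ ω in {ω | U ω = u}, Ym1 ω ∂μ) / P {ω | U ω = u})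
    (d : ℝ) (hd : d = 1 ∨ d = -1) :
    (∫ ω, Z ω * A ω * Y ω * (if A ω = d then 1 else 0) / (δ * fZ ω) ∂μ) =
      (1 / δ) *
        ((∑ u : 𝒰, δt u * EY1 u * P {ω | U ω = u}) * (if d = 1 then 1 else 0) +
          (∑ u : 𝒰, δt u * EYm1 u * P {ω | U ω = u}) * (if d = -1 then 1 else 0)) := by
  classical
  -- basic positivity / nonzero facts
  have hPnn : ∀ s, 0 ≤ P s := fun s => by rw [hP]; exact ENNReal.toReal_nonneg
  have hmZ : ∀ z : ℝ, MeasurableSet {ω | Z ω = z} := fun z =>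
    hZmeas (measurableSet_singleton z)
  have hmS : ∀ (z a : ℝ) (u : 𝒰), MeasurableSet {ω | Z ω = z ∧ A ω = a ∧ U ω = u} := by
    intro z a u
    have : {ω | Z ω = z ∧ A ω = a ∧ U ω = u} =
        Z ⁻¹' {z} ∩ (A ⁻¹' {a} ∩ {ω | U ω = u}) := rfl
    rw [this]
    exact (hZmeas (measurableSet_singleton z)).inter
      ((hAmeas (measurableSet_singleton a)).inter (hUmeas u))
  have hPadd : ∀ s t : Set Ω, MeasurableSet t → Disjoint s t → P (s ∪ t) = P s + P t := by
    intro s t ht hdisj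
    rw [hP, hP, hP, measure_union hdisj ht,
      ENNReal.toReal_add (measure_ne_top μ s) (measure_ne_top μ t)]
  have hPm1 : P {ω | Z ω = -1} = 1 - P {ω | Z ω = 1} := by
    have huniv : {ω | Z ω = 1} ∪ {ω | Z ω = -1} = Set.univ := by
      ext ω; simpa using hZpm ω
    have hdisj : Disjoint {ω | Z ω = 1} {ω | Z ω = -1} := by
      rw [Set.disjoint_left]
      intro ω h1 h2
      simp only [Set.mem_setOf_eq] at h1 h2
      rw [h1] at h2; norm_num at h2
    have h1 : P (Set.univ : Set Ω) = 1 := by rw [hP]; simp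
    have := hPadd _ _ (hmZ (-1)) hdisj
    rw [huniv, h1] at this
    linarith
  have hP1ne : P {ω | Z ω = 1} ≠ 0 := ne_of_gt hZ1
  have hPm1pos : 0 < P {ω | Z ω = -1} := by rw [hPm1]; linarith
  have hPm1ne : P {ω | Z ω = -1} ≠ 0 := ne_of_gt hPm1pos
  have hPupos : ∀ u, 0 < P {ω | U ω = u} := by
    intro u
    have h := hZUpos 1 u (Or.inl rfl)
    rw [hindep 1 u] at h
    rcases (hPnn {ω | U ω = u}).lt_or_eq with h'|h'
    · exact h'
    · rw [← h', mul_zero] at h; exact absurd h (lt_irrefl 0)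
  have hPune : ∀ u, P {ω | U ω = u} ≠ 0 := fun u => ne_of_gt (hPupos u)
  -- measurable modifications of Y1, Ym1
  have hY1a : AEMeasurable Y1 μ := hY1.aemeasurable
  have hYm1a : AEMeasurable Ym1 μ := hYm1.aemeasurable
  set g : Ω → ℝ × ℝ := fun ω => (hY1a.mk Y1 ω, hYm1a.mk Ym1 ω) with hgdef
  have hg : Measurable g := hY1a.measurable_mk.prodMk hYm1a.measurable_mk
  have haepair : ∀ᵐ ω ∂μ, (Y1 ω, Ym1 ω) = g ω := by
    filter_upwards [hY1a.ae_eq_mk, hYm1a.ae_eq_mk] with ω h1 h2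
    exact congrArg₂ Prod.mk h1 h2
  -- latent unconfoundedness in measure form, for the measurable modification
  have hlatentμ : ∀ B : Set (ℝ × ℝ), MeasurableSet B → ∀ (z a : ℝ) (u : 𝒰),
      μ {ω | g ω ∈ B ∧ Z ω = z ∧ A ω = a ∧ U ω = u} * μ {ω | U ω = u} =
        μ {ω | g ω ∈ B ∧ U ω = u} * μ {ω | Z ω = z ∧ A ω = a ∧ U ω = u} := by
    intro B hB z a u
    have e1 : μ {ω | (Y1 ω, Ym1 ω) ∈ B ∧ Z ω = z ∧ A ω = a ∧ U ω = u} =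
        μ {ω | g ω ∈ B ∧ Z ω = z ∧ A ω = a ∧ U ω = u} := by
      apply measure_congr
      rw [Filter.eventuallyEq_set]
      filter_upwards [haepair] with ω h
      rw [h]
    have e2 : μ {ω | (Y1 ω, Ym1 ω) ∈ B ∧ U ω = u} = μ {ω | g ω ∈ B ∧ U ω = u} := by
      apply measure_congr
      rw [Filter.eventuallyEq_set]
      filter_upwards [haepair] with ω h
      rw [h]
    have h0 := hlatent B hB z a u
    simp only [hP] at h0
    rw [e1, e2, ← ENNReal.toReal_mul, ← ENNReal.toReal_mul] at h0
    exact (ENNReal.toReal_eq_toReal_iff'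
      (ENNReal.mul_ne_top (measure_ne_top μ _) (measure_ne_top μ _))
      (ENNReal.mul_ne_top (measure_ne_top μ _) (measure_ne_top μ _))).1 h0
  -- key integral transfer
  have hkeyW : ∀ (W : Ω → ℝ) (f : ℝ × ℝ → ℝ), Measurable f →
      (W =ᵐ[μ] fun ω => f (g ω)) → ∀ (z a : ℝ) (u : 𝒰),
      (μ {ω | U ω = u}).toReal *
          ∫ ω in {ω | Z ω = z ∧ A ω = a ∧ U ω = u}, W ω ∂μ =
        (μ {ω | Z ω = z ∧ A ω = a ∧ U ω = u}).toReal *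
          ∫ ω in {ω | U ω = u}, W ω ∂μ := by
    intro W f hf hWf z a u
    have ht := stmt14_transfer μ g hg {ω | Z ω = z ∧ A ω = a ∧ U ω = u} {ω | U ω = u}
      (μ {ω | U ω = u}) (μ {ω | Z ω = z ∧ A ω = a ∧ U ω = u})
      (fun B hB => (mul_comm _ _).trans ((hlatentμ B hB z a u).trans (mul_comm _ _)))
      f hf
    have i1 : ∫ ω in {ω | Z ω = z ∧ A ω = a ∧ U ω = u}, W ω ∂μ =
        ∫ ω in {ω | Z ω = z ∧ A ω = a ∧ U ω = u}, f (g ω) ∂μ :=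
      integral_congr_ae (ae_restrict_of_ae hWf)
    have i2 : ∫ ω in {ω | U ω = u}, W ω ∂μ =
        ∫ ω in {ω | U ω = u}, f (g ω) ∂μ :=
      integral_congr_ae (ae_restrict_of_ae hWf)
    rw [i1, i2]; exact ht
  -- specialize to Y1 and Ym1, expressed via conditional means
  have hkey1 : ∀ (z a : ℝ) (u : 𝒰),
      ∫ ω in {ω | Z ω = z ∧ A ω = a ∧ U ω = u}, Y1 ω ∂μ =
        P {ω | Z ω = z ∧ A ω = a ∧ U ω = u} * EY1 u := by
    intro z a u
    have hae : Y1 =ᵐ[μ] fun ω => Prod.fst (g ω) := hY1a.ae_eq_mk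
    have h := hkeyW Y1 Prod.fst measurable_fst hae z a u
    have hPu : (μ {ω | U ω = u}).toReal ≠ 0 := by rw [← hP]; exact hPune u
    rw [hEY1 u, hP {ω | Z ω = z ∧ A ω = a ∧ U ω = u}, hP {ω | U ω = u}]
    field_simp
    linarith
  have hkeym1 : ∀ (z a : ℝ) (u : 𝒰),
      ∫ ω in {ω | Z ω = z ∧ A ω = a ∧ U ω = u}, Ym1 ω ∂μ =
        P {ω | Z ω = z ∧ A ω = a ∧ U ω = u} * EYm1 u := by
    intro z a u
    have hae : Ym1 =ᵐ[μ] fun ω => Prod.snd (g ω) := hYm1a.ae_eq_mk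
    have h := hkeyW Ym1 Prod.snd measurable_snd hae z a u
    have hPu : (μ {ω | U ω = u}).toReal ≠ 0 := by rw [← hP]; exact hPune u
    rw [hEYm1 u, hP {ω | Z ω = z ∧ A ω = a ∧ U ω = u}, hP {ω | U ω = u}]
    field_simp
    linarith
  -- set reorderings for δt
  have hsetc : ∀ (z : ℝ) (u : 𝒰),
      {ω | A ω = 1 ∧ Z ω = z ∧ U ω = u} = {ω | Z ω = z ∧ A ω = 1 ∧ U ω = u} := by
    intro z u; ext ω; simp only [Set.mem_setOf_eq]; tauto
  have hδt' : ∀ u, δt u =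
      P {ω | Z ω = 1 ∧ A ω = 1 ∧ U ω = u} / (P {ω | Z ω = 1} * P {ω | U ω = u}) -
        P {ω | Z ω = -1 ∧ A ω = 1 ∧ U ω = u} / (P {ω | Z ω = -1} * P {ω | U ω = u}) := by
    intro u
    rw [hδt u, hsetc 1 u, hsetc (-1) u, hindep 1 u, hindep (-1) u]
  -- splitting by A-value
  have hsplit : ∀ (z : ℝ) (u : 𝒰),
      P {ω | Z ω = z ∧ U ω = u} =
        P {ω | Z ω = z ∧ A ω = 1 ∧ U ω = u} + P {ω | Z ω = z ∧ A ω = -1 ∧ U ω = u} := by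
    intro z u
    have hun : {ω | Z ω = z ∧ U ω = u} =
        {ω | Z ω = z ∧ A ω = 1 ∧ U ω = u} ∪ {ω | Z ω = z ∧ A ω = -1 ∧ U ω = u} := by
      ext ω
      simp only [Set.mem_setOf_eq, Set.mem_union]
      constructor
      · rintro ⟨hz, hu⟩
        rcases hApm ω with h | h
        · exact Or.inl ⟨hz, h, hu⟩
        · exact Or.inr ⟨hz, h, hu⟩
      · rintro (⟨hz, _, hu⟩ | ⟨hz, _, hu⟩) <;> exact ⟨hz, hu⟩
    have hdisj : Disjoint {ω | Z ω = z ∧ A ω = 1 ∧ U ω = u}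
        {ω | Z ω = z ∧ A ω = -1 ∧ U ω = u} := by
      rw [Set.disjoint_left]
      rintro ω ⟨_, h1, _⟩ ⟨_, h2, _⟩
      rw [h1] at h2; norm_num at h2
    rw [hun, hPadd _ _ (hmS z (-1) u) hdisj]
  rcases hd with rfl | rfl
  · -- d = 1
    have hYdeq : ∀ ω, A ω = 1 → Y ω = Y1 ω := by
      intro ω h
      rw [hY ω, h]
      norm_num
    have hcomb : ∀ u : 𝒰,
        (1:ℝ) / (δ * P {ω | Z ω = 1}) * P {ω | Z ω = 1 ∧ A ω = 1 ∧ U ω = u} +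
          (-(1:ℝ)) / (δ * P {ω | Z ω = -1}) * P {ω | Z ω = -1 ∧ A ω = 1 ∧ U ω = u} =
          1 / δ * (δt u * P {ω | U ω = u}) := by
      intro u
      rw [hδt' u]
      field_simp [hδ0, hP1ne, hPm1ne, hPune u]
      ring
    rw [stmt14_main μ P Z A hZmeas hAmeas hZpm U hUmeas Y1 Y hY1 1 δ fZ hfZ hYdeq
      EY1 δt (fun z u => hkey1 z 1 u) hcomb]
    norm_num
    rw [Finset.mul_sum]
    exact Finset.sum_congr rfl fun u _ => by ring
  · -- d = -1
    have hYdeq : ∀ ω, A ω = -1 → Y ω = Ym1 ω := by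
      intro ω h
      rw [hY ω, h]
      norm_num
    have hcomb : ∀ u : 𝒰,
        (-1:ℝ) / (δ * P {ω | Z ω = 1}) * P {ω | Z ω = 1 ∧ A ω = -1 ∧ U ω = u} +
          (-(-1:ℝ)) / (δ * P {ω | Z ω = -1}) * P {ω | Z ω = -1 ∧ A ω = -1 ∧ U ω = u} =
          1 / δ * (δt u * P {ω | U ω = u}) := by
      intro u
      have hs1 : P {ω | Z ω = 1 ∧ A ω = -1 ∧ U ω = u} =
          P {ω | Z ω = 1} * P {ω | U ω = u} - P {ω | Z ω = 1 ∧ A ω = 1 ∧ U ω = u} := by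
        have := hsplit 1 u
        rw [hindep 1 u] at this
        linarith
      have hs2 : P {ω | Z ω = -1 ∧ A ω = -1 ∧ U ω = u} =
          P {ω | Z ω = -1} * P {ω | U ω = u} - P {ω | Z ω = -1 ∧ A ω = 1 ∧ U ω = u} := by
        have := hsplit (-1) u
        rw [hindep (-1) u] at this
        linarith
      rw [hδt' u, hs1, hs2]
      field_simp [hδ0, hP1ne, hPm1ne, hPune u]
      ring
    rw [stmt14_main μ P Z A hZmeas hAmeas hZpm U hUmeas Ym1 Y hYm1 (-1) δ fZ hfZ hYdeq
      EYm1 δt (fun z u => hkeym1 z (-1) u) hcomb]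
    norm_num
    rw [Finset.mul_sum]
    exact Finset.sum_congr rfl fun u _ => by ring
end
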